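/- Let d, a be odd coprime positive integers and p a prime with gcd(a, p) = 1 and gcd(d, p) = 1. If (d, a²) = (7, 1) and p = 2, the equation d·x² + a² = 4·p^y has exactly the positive integer solutions (x, y) = (1, 1) and (3, 4); i.e., 7x² + 1 = 2^(y+2) has exactly these two solutions. -/

import Mathlib

private lemma sq_of_cop (u w x : ℕ) (hcop : Nat.Coprime u w) (h : u * w = x^2) :
    ∃ b, u = b^2 := by
  have : IsUnit (gcd u w) := by rw [Nat.isUnit_iff]; exact Nat.coprime_iff_gcd_eq_one.mp hcop
  exact exists_eq_pow_of_mul_eq_pow this h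

private lemma pow2_mod7 (k : ℕ) : 2 ^ k % 7 = 2 ^ (k % 3) % 7 := by
  conv_lhs => rw [← Nat.div_add_mod k 3]
  rw [pow_add, pow_mul, Nat.mul_mod, Nat.pow_mod]
  norm_num

private lemma pow2_mod3 (k : ℕ) : 2 ^ k % 3 = 2 ^ (k % 2) % 3 := by
  conv_lhs => rw [← Nat.div_add_mod k 2]
  rw [pow_add, pow_mul, Nat.mul_mod, Nat.pow_mod]
  norm_num

set_option maxHeartbeats 1000000 in
-- main number-theoretic core: 2^n = 7x²+1, n ≥ 3 → (n,x) = (3,1) or (6,3)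
private lemma core (n x : ℕ) (hn : 3 ≤ n) (h : 2 ^ n = 7 * x ^ 2 + 1) :
    (n = 3 ∧ x = 1) ∨ (n = 6 ∧ x = 3) := by
  -- Step 1 : 3 ∣ n
  have h7 : 2 ^ n % 7 = 1 := by omega
  have h3n : n % 3 = 0 := by
    rw [pow2_mod7] at h7
    have h012 : n % 3 = 0 ∨ n % 3 = 1 ∨ n % 3 = 2 := by omega
    rcases h012 with h' | h' | h' <;> rw [h'] at h7 <;> norm_num at h7
    exact h'
  obtain ⟨k, rfl⟩ : ∃ k, n = 3 * k := ⟨n / 3, by omega⟩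
  have hk1 : 1 ≤ k := by omega
  -- u = 2^k - 1
  obtain ⟨u, hu⟩ : ∃ u, 2 ^ k = u + 1 := ⟨2 ^ k - 1, by have := Nat.one_le_two_pow (n := k); omega⟩
  have hcube : (u + 1) ^ 3 = 7 * x ^ 2 + 1 := by rw [← hu, ← pow_mul, ← h]; ring_nf
  have hfac : u * (u ^ 2 + 3 * u + 3) = 7 * x ^ 2 := by nlinarith [hcube]
  rcases Nat.even_or_odd k with hke | hko
  · -- k even : k = 2m, use t = 2^(3m)
    obtain ⟨m, rfl⟩ := hke
    have hm1 : 1 ≤ m := by omega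
    obtain ⟨c, hc⟩ : ∃ c, 2 ^ (3 * m) = c + 1 :=
      ⟨2 ^ (3 * m) - 1, by have := Nat.one_le_two_pow (n := 3 * m); omega⟩
    have hsq : (c + 1) ^ 2 = 7 * x ^ 2 + 1 := by
      rw [← hc, ← pow_mul, ← h]; ring_nf
    have hfac2 : c * (c + 2) = 7 * x ^ 2 := by nlinarith [hsq]
    -- c is odd
    have hc8 : 8 ∣ 2 ^ (3 * m) := by
      have : (2:ℕ) ^ 3 ∣ 2 ^ (3 * m) := pow_dvd_pow 2 (by omega)
      simpa using this
    have hcodd : c % 2 = 1 := by omega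
    have hcop : Nat.Coprime c (c + 2) := by
      have h1 : Nat.gcd c (c + 2) ∣ c := Nat.gcd_dvd_left _ _
      have h2 : Nat.gcd c (c + 2) ∣ c + 2 := Nat.gcd_dvd_right _ _
      have hd : Nat.gcd c (c + 2) ∣ 2 := by
        have := Nat.dvd_sub h2 h1
        have he : c + 2 - c = 2 := by omega
        rwa [he] at this
      rcases (Nat.dvd_prime Nat.prime_two).mp hd with h' | h'
      · exact h'
      · exfalso; rw [h'] at h1; omega
    -- 7 ∣ c
    have h7c : 7 ∣ c := by
      have : 2 ^ (3 * m) % 7 = 1 := by rw [pow2_mod7]; simp [Nat.mul_mod_right]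
      omega
    -- extract square : c + 2 = b^2
    obtain ⟨w, hw⟩ := h7c
    have hxw : (c + 2) * w = x ^ 2 := by
      have h77 : 7 * ((c+2) * w) = 7 * x ^ 2 := by rw [← hfac2, hw]; ring
      omega
    have hcopw : Nat.Coprime (c + 2) w :=
      Nat.Coprime.coprime_dvd_right ⟨7, by rw [hw]; ring⟩ hcop.symm
    obtain ⟨b, hb⟩ := sq_of_cop _ _ _ hcopw hxw
    -- b^2 = 2^(3m) + 1 ; solve (b-1)(b+1) = 2^(3m)
    have hb2 : b ^ 2 = 2 ^ (3 * m) + 1 := by omega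
    have h8le : 8 ≤ 2 ^ (3 * m) := Nat.le_of_dvd (by positivity) hc8
    have hb3 : 3 ≤ b := by nlinarith [hb2, h8le]
    obtain ⟨e, he⟩ : ∃ e, b = e + 1 := ⟨b - 1, by omega⟩
    have hb2' : (e + 1) ^ 2 = 2 ^ (3 * m) + 1 := he ▸ hb2
    have hexp : (e + 1) ^ 2 = e * (e + 2) + 1 := by ring
    have hee : e * (e + 2) = 2 ^ (3 * m) := by linarith [hb2', hexp]
    have hedvd : e ∣ 2 ^ (3 * m) := ⟨e + 2, hee.symm⟩
    obtain ⟨s, hs, hes⟩ := (Nat.dvd_prime_pow Nat.prime_two).mp hedvd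
    -- e even since b odd
    have hbodd : b % 2 = 1 := by
      rcases Nat.even_or_odd b with hbe | hbo
      · exfalso
        obtain ⟨t, rfl⟩ := hbe
        have h4t : (t + t) ^ 2 = 4 * t ^ 2 := by ring
        omega
      · exact Nat.odd_iff.mp hbo
    have hs1 : 1 ≤ s := by
      rcases Nat.eq_zero_or_pos s with rfl | h'
      · simp at hes; omega
      · exact h'
    have he2 : e + 2 = 2 ^ (3 * m - s) := by
      have : 2 ^ s * (e + 2) = 2 ^ s * 2 ^ (3 * m - s) := by
        rw [← pow_add]
        have : s + (3 * m - s) = 3 * m := by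
          have := Nat.le_of_dvd (by positivity) (hes ▸ hedvd : (2:ℕ)^s ∣ 2^(3*m))
          have hsle : s ≤ 3 * m := by
            by_contra hc'
            push_neg at hc'
            have := pow_lt_pow_right₀ (show (1:ℕ) < 2 by norm_num) hc'
            omega
          omega
        rw [this, ← hee, hes]
      have hpos : 0 < 2 ^ s := by positivity
      exact Nat.eq_of_mul_eq_mul_left hpos this
    have hsval : s = 1 := by
      by_contra hne
      have hs2 : 2 ≤ s := by omega
      have h4s : 4 ∣ e := by
        rw [hes]
        have : (2:ℕ)^2 ∣ 2 ^ s := pow_dvd_pow 2 hs2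
        simpa using this
      have hge : 6 ≤ e + 2 := by
        have : (4:ℕ) ≤ 2 ^ s := by
          calc (4:ℕ) = 2^2 := by norm_num
          _ ≤ 2^s := Nat.pow_le_pow_right (by norm_num) hs2
        omega
      have h43 : (4:ℕ) ∣ 2 ^ (3 * m - s) := by
        have h3le : 3 ≤ 3 * m - s := by
          by_contra hc'
          push_neg at hc'
          have hle4 : 2 ^ (3 * m - s) ≤ 2 ^ 2 := Nat.pow_le_pow_right (by norm_num) (by omega)
          norm_num at hle4
          omega
        have : (2:ℕ)^2 ∣ 2 ^ (3*m-s) := pow_dvd_pow 2 (by omega)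
        simpa using this
      omega
    -- s = 1 : e = 2, e+2 = 4 = 2^(3m-1) → m = 1
    subst hsval
    norm_num at hes
    have : (4:ℕ) = 2 ^ (3 * m - 1) := by omega
    have hm : m = 1 := by
      by_contra hm'
      have : 2 ≤ m := by omega
      have : 5 ≤ 3 * m - 1 := by omega
      have : (2:ℕ)^5 ≤ 2 ^ (3*m-1) := Nat.pow_le_pow_right (by norm_num) this
      omega
    right
    subst hm
    refine ⟨by norm_num, ?_⟩
    have h64 : (64:ℕ) = 7 * x ^ 2 + 1 := by
      have h' := h
      norm_num at h'
      omega
    have hx9 : x ^ 2 = 9 := by omega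
    exact Nat.pow_left_injective (n := 2) (by norm_num) (show x ^ 2 = 3 ^ 2 by rw [hx9])
  · -- k odd
    have h2k3 : 2 ^ k % 3 = 2 := by
      obtain ⟨j, hj⟩ := hko
      have hk2 : k % 2 = 1 := by omega
      rw [pow2_mod3, hk2]
      norm_num
    have hu1mod3 : u % 3 = 1 := by omega
    have hcop : Nat.Coprime u (u ^ 2 + 3 * u + 3) := by
      have hdu : Nat.gcd u (u ^ 2 + 3 * u + 3) ∣ u := Nat.gcd_dvd_left _ _
      have hd : Nat.gcd u (u ^ 2 + 3 * u + 3) ∣ 3 := by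
        have h1 : Nat.gcd u (u^2+3*u+3) ∣ u * (u + 3) := hdu.mul_right _
        have h2 : Nat.gcd u (u^2+3*u+3) ∣ u^2+3*u+3 := Nat.gcd_dvd_right _ _
        have hsub := Nat.dvd_sub h2 h1
        have hid : u * (u + 3) + 3 = u^2+3*u+3 := by ring
        have he3 : u^2+3*u+3 - u*(u+3) = 3 := by omega
        rwa [he3] at hsub
      rcases (Nat.dvd_prime Nat.prime_three).mp hd with h' | h'
      · exact h'
      · exfalso
        rw [h'] at hdu
        omega
    -- which factor does 7 divide?
    rcases Nat.eq_zero_or_pos (k % 3) with hk3 | hk3pos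
    · -- 3 ∣ k : 7 ∣ u, so u² + 3u + 3 is a square, impossible (k ≥ 3)
      have hk3' : 3 ≤ k := by omega
      have h7u : 7 ∣ u := by
        have : 2 ^ k % 7 = 1 := by rw [pow2_mod7, hk3]; norm_num
        omega
      obtain ⟨w, hw⟩ := h7u
      have hxw : (u ^ 2 + 3 * u + 3) * w = x ^ 2 := by
        have h77 : 7 * ((u^2+3*u+3) * w) = 7 * x ^ 2 := by rw [← hfac, hw]; ring
        omega
      have hcopw : Nat.Coprime (u ^ 2 + 3 * u + 3) w :=
        Nat.Coprime.coprime_dvd_right ⟨7, by rw [hw]; ring⟩ hcop.symm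
      obtain ⟨b, hb⟩ := sq_of_cop _ _ _ hcopw hxw
      -- (u+1)² = u²+2u+1 < b² = u²+3u+3 < (u+2)² = u²+4u+4  (u ≥ 7)
      exfalso
      have h2k8 : (8:ℕ) ≤ 2 ^ k := by
        calc (8:ℕ) = 2 ^ 3 := by norm_num
        _ ≤ 2 ^ k := Nat.pow_le_pow_right (by norm_num) hk3'
      have hu7 : 7 ≤ u := by omega
      have h1 : (u + 1) ^ 2 < b ^ 2 := by nlinarith [hb]
      have h2 : b ^ 2 < (u + 2) ^ 2 := by nlinarith [hb]
      have hlt1 : u + 1 < b := by nlinarith [h1]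
      have hlt2 : b < u + 2 := by nlinarith [h2]
      omega
    · -- 3 ∤ k : 7 ∣ u²+3u+3, so u = 2^k - 1 is a square; k odd → k = 1
      have h7v : 7 ∣ u ^ 2 + 3 * u + 3 := by
        have h2k7 : 2 ^ k % 7 = 2 ∨ 2 ^ k % 7 = 4 := by
          rw [pow2_mod7]
          have h12 : k % 3 = 1 ∨ k % 3 = 2 := by omega
          rcases h12 with h' | h' <;> rw [h'] <;> norm_num
        have hu7 : u % 7 = 1 ∨ u % 7 = 3 := by omega
        rcases hu7 with h' | h'
        · obtain ⟨q, rfl⟩ : ∃ q, u = 7 * q + 1 := ⟨u / 7, by omega⟩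
          exact ⟨7*q^2+5*q+1, by ring⟩
        · obtain ⟨q, rfl⟩ : ∃ q, u = 7 * q + 3 := ⟨u / 7, by omega⟩
          exact ⟨7*q^2+9*q+3, by ring⟩
      obtain ⟨w, hw⟩ := h7v
      have hxw : u * w = x ^ 2 := by
        have h77 : 7 * (u * w) = 7 * x ^ 2 := by rw [← hfac, hw]; ring
        omega
      have hcopw : Nat.Coprime u w :=
        Nat.Coprime.coprime_dvd_right ⟨7, by rw [hw]; ring⟩ hcop
      obtain ⟨b, hb⟩ := sq_of_cop _ _ _ hcopw hxw
      -- u = 2^k - 1 = b² ; if k ≥ 2 then u ≡ 3 mod 4, impossible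
      have hk : k = 1 := by
        by_contra hk'
        have hk2 : 2 ≤ k := by omega
        have h4 : 4 ∣ 2 ^ k := by
          have : (2:ℕ)^2 ∣ 2^k := pow_dvd_pow 2 hk2
          simpa using this
        have hu34 : u % 4 = 3 := by omega
        have hbm : b ^ 2 % 4 = 0 ∨ b ^ 2 % 4 = 1 := by
          rcases Nat.even_or_odd b with hbe | hbo
          · obtain ⟨t, rfl⟩ := hbe
            left
            have : (t + t) ^ 2 = 4 * t ^ 2 := by ring
            omega
          · obtain ⟨t, rfl⟩ := hbo
            right
            have : (2 * t + 1) ^ 2 = 4 * (t ^ 2 + t) + 1 := by ring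
            omega
        omega
      left
      subst hk
      refine ⟨by norm_num, ?_⟩
      have h8 : (8:ℕ) = 7 * x ^ 2 + 1 := by
        have h' := h
        norm_num at h'
        omega
      have hx1 : x ^ 2 = 1 := by omega
      exact Nat.pow_left_injective (n := 2) (by norm_num) (show x ^ 2 = 1 ^ 2 by rw [hx1])

/-- Exceptional case of Proposition 2.1: for `(d, a²) = (7, 1)` and `p = 2`, the equation
`d·x² + a² = 4·p^y` has exactly the positive integer solutions `(1, 1)` and `(3, 4)`. -/
theorem stmt_11 (d a p : ℕ) (hd : Odd d) (ha : Odd a) (hcop : Nat.Coprime d a)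
    (hp : p.Prime) (hap : Nat.Coprime a p) (hdp : Nat.Coprime d p)
    (hd7 : d = 7) (ha1 : a ^ 2 = 1) (hp2 : p = 2) :
    ∀ x y : ℕ, 0 < x → 0 < y →
      (d * x ^ 2 + a ^ 2 = 4 * p ^ y ↔ (x = 1 ∧ y = 1) ∨ (x = 3 ∧ y = 4)) := by
  subst hd7 hp2
  intro x y hx hy
  constructor
  · intro heq
    rw [ha1] at heq
    have h : 2 ^ (y + 2) = 7 * x ^ 2 + 1 := by
      rw [pow_add]; omega
    rcases core (y + 2) x (by omega) h with ⟨h1, h2⟩ | ⟨h1, h2⟩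
    · left; omega
    · right; omega
  · rintro (⟨rfl, rfl⟩ | ⟨rfl, rfl⟩) <;> rw [ha1] <;> norm_num
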